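/- Let h and k be integers with 4 ≤ h ≤ k−1. If A is an arithmetic progression of k nonnegative integers with 0 ∈ A, then |h^∧_± A| = 2hk − h(h+1) + 1. -/

import Mathlib

open Finset

/-- The restricted `h`-fold signed sumset of a finite set `A` of integers:
all sums `∑ λᵢ aᵢ` with `λᵢ ∈ {-1,0,1}` and `∑ |λᵢ| = h`. -/
def signedSumset (h : ℕ) (A : Finset ℤ) : Set ℤ :=
  {s | ∃ f : ℤ → ℤ, (∀ a, f a = -1 ∨ f a = 0 ∨ f a = 1) ∧ (∀ a ∉ A, f a = 0) ∧
    (∑ a ∈ A, |f a|) = (h : ℤ) ∧ s = ∑ a ∈ A, f a * a}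

/-- `Mz k h = (k-1) + (k-2) + ⋯ + (k-h)`, the maximal signed sum. -/
def Mz (k h : ℕ) : ℤ := ∑ i ∈ Finset.range h, ((k:ℤ) - 1 - i)

lemma Mz_two_mul (k h : ℕ) : 2 * Mz k h = 2*(h:ℤ)*k - h*h - h := by
  induction h with
  | zero => simp [Mz]
  | succ n ih =>
    rw [Mz, Finset.sum_range_succ, ← Mz]
    push_cast
    push_cast at ih
    linarith

lemma Mz_nonneg {k h : ℕ} (hk : h ≤ k) : 0 ≤ Mz k h := by
  apply Finset.sum_nonneg
  intro i hi
  simp only [Finset.mem_range] at hi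
  have : i < k := lt_of_lt_of_le hi hk
  omega

lemma Mz_mono (k h : ℕ) : Mz k h ≤ Mz (k+1) h := by
  apply Finset.sum_le_sum
  intro i _
  push_cast
  omega

lemma Mz_succ_succ (k m : ℕ) : Mz (k+1) (m+1) = k + Mz k m := by
  rw [Mz, Mz, Finset.sum_range_succ']
  push_cast
  rw [Finset.sum_congr rfl (by intro i _; push_cast; ring :
    ∀ i ∈ Finset.range m, ((k:ℤ)+1-1-((i:ℤ)+1)) = (k:ℤ)-1-i)]
  ring

lemma le_Mz {m h : ℕ} (hh : 2 ≤ h) (hm : h + 1 ≤ m) : (m : ℤ) ≤ Mz m h := by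
  have h1 : Mz m 2 ≤ Mz m h := by
    apply Finset.sum_le_sum_of_subset_of_nonneg (Finset.range_subset_range.2 hh)
    intro i hi _
    simp only [Finset.mem_range] at hi
    omega
  have h2 : Mz m 2 = 2*(m:ℤ) - 3 := by
    simp [Mz, Finset.sum_range_succ]
    ring
  have : (3:ℤ) ≤ m := by exact_mod_cast by omega
  linarith

lemma sum_le_Mz : ∀ (k : ℕ) (s : Finset ℕ), s ⊆ Finset.range k →
    (∑ i ∈ s, (i:ℤ)) ≤ Mz k s.card := by
  intro k
  induction k with
  | zero =>
    intro s hs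
    have : s = ∅ := Finset.subset_empty.1 (by simpa using hs)
    simp [this, Mz]
  | succ k ih =>
    intro s hs
    by_cases hk : k ∈ s
    · have hs' : s.erase k ⊆ Finset.range k := by
        intro i hi
        have h1 := Finset.mem_of_mem_erase hi
        have h2 := Finset.ne_of_mem_erase hi
        have := hs h1
        simp only [Finset.mem_range] at this ⊢
        omega
      have hcard : s.card = (s.erase k).card + 1 := by
        rw [Finset.card_erase_of_mem hk]
        have : 1 ≤ s.card := Finset.card_pos.2 ⟨k, hk⟩
        omega
      have hsum : (∑ i ∈ s, (i:ℤ)) = k + ∑ i ∈ s.erase k, (i:ℤ) := by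
        rw [← Finset.sum_erase_add s _ hk]; ring
      rw [hsum, hcard, Mz_succ_succ]
      have := ih (s.erase k) hs'
      linarith
    · have hs' : s ⊆ Finset.range k := by
        intro i hi
        have := hs hi
        simp only [Finset.mem_range] at this ⊢
        rcases Nat.lt_succ_iff_lt_or_eq.1 this with h | h
        · exact h
        · exact absurd (h ▸ hi) hk
      exact le_trans (ih s hs') (Mz_mono k s.card)

/-- `t` is representable as a signed sum of `h` distinct elements of `{0,…,k-1}`. -/
def IsRep (k h : ℕ) (t : ℤ) : Prop :=
  ∃ g : ℕ → ℤ, (∀ i, g i = -1 ∨ g i = 0 ∨ g i = 1) ∧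
    (∑ i ∈ Finset.range k, |g i|) = (h:ℤ) ∧ (∑ i ∈ Finset.range k, g i * i) = t

lemma isRep_neg {k h : ℕ} {t : ℤ} (H : IsRep k h t) : IsRep k h (-t) := by
  obtain ⟨g, hv, hs, ht⟩ := H
  refine ⟨fun i => -g i, fun i => by rcases hv i with h|h|h <;> simp [h], ?_, ?_⟩
  · simpa using hs
  · simp only [neg_mul, Finset.sum_neg_distrib]
    rw [ht]

lemma sum_single (k a : ℕ) (ha : a < k) (f : ℕ → ℤ) :
    ∑ i ∈ Finset.range k, (if i = a then f i else 0) = f a := by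
  rw [Finset.sum_ite_eq' (Finset.range k) a f]
  simp [ha]

lemma isRep_of_three {k a b c : ℕ} {x y z : ℤ} (ha : a < k) (hb : b < k) (hc : c < k)
    (hab : a ≠ b) (hac : a ≠ c) (hbc : b ≠ c)
    (hx : x = -1 ∨ x = 1) (hy : y = -1 ∨ y = 1) (hz : z = -1 ∨ z = 1)
    {t : ℤ} (hval : x*a + y*b + z*c = t) :
    IsRep k 3 t := by
  subst hval
  refine ⟨fun i => (if i = a then x else 0) + (if i = b then y else 0) +
    (if i = c then z else 0), ?_, ?_, ?_⟩
  · intro i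
    by_cases h1 : i = a
    · subst h1; simp [hab, hac]; tauto
    · by_cases h2 : i = b
      · subst h2; simp [h1, hbc]; tauto
      · by_cases h3 : i = c
        · subst h3; simp [h1, h2]; tauto
        · simp [h1, h2, h3]
  · have habs : ∀ i, |(if i = a then x else 0) + (if i = b then y else 0) +
        (if i = c then z else 0)| = (if i = a then |x| else 0) + (if i = b then |y| else 0) +
        (if i = c then |z| else 0) := by
      intro i
      by_cases h1 : i = a
      · subst h1; simp [hab, hac]
      · by_cases h2 : i = b
        · subst h2; simp [h1, hbc]
        · by_cases h3 : i = c
          · subst h3; simp [h1, h2]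
          · simp [h1, h2, h3]
    rw [Finset.sum_congr rfl (fun i _ => habs i)]
    rw [Finset.sum_add_distrib, Finset.sum_add_distrib,
      sum_single k a ha, sum_single k b hb, sum_single k c hc]
    rcases hx with h|h <;> rcases hy with h'|h' <;> rcases hz with h''|h'' <;>
      simp [h, h', h'']
  · have : ∀ i, ((if i = a then x else 0) + (if i = b then y else 0) +
        (if i = c then z else 0)) * (i:ℤ) = (if i = a then x * i else 0) +
        (if i = b then y * i else 0) + (if i = c then z * i else 0) := by
      intro i
      by_cases h1 : i = a
      · subst h1; simp [hab, hac]
      · by_cases h2 : i = b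
        · subst h2; simp [h1, hbc]
        · by_cases h3 : i = c
          · subst h3; simp [h1, h2]
          · simp [h1, h2, h3]
    rw [Finset.sum_congr rfl (fun i _ => this i)]
    rw [Finset.sum_add_distrib, Finset.sum_add_distrib,
      sum_single k a ha (fun i => x * i), sum_single k b hb (fun i => y * i),
      sum_single k c hc (fun i => z * i)]

lemma isRep_three {k : ℕ} (hk : 4 ≤ k) {t : ℤ} (ht0 : 0 ≤ t) (ht : t ≤ 3*(k:ℤ) - 6) :
    IsRep k 3 t := by
  have hk' : (4:ℤ) ≤ (k:ℕ) := by exact_mod_cast hk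
  rcases eq_or_lt_of_le ht0 with h0 | h0
  · exact isRep_of_three (a := 1) (b := 2) (c := 3) (x := 1) (y := 1) (z := -1)
      (by omega) (by omega) (by omega) (by omega) (by omega) (by omega)
      (Or.inr rfl) (Or.inr rfl) (Or.inl rfl) (by push_cast; omega)
  · rcases le_or_gt t ((k:ℤ) - 2) with h1 | h1
    · exact isRep_of_three (a := 0) (b := 1) (c := t.toNat + 1) (x := 1) (y := -1) (z := 1)
        (by omega) (by omega) (by omega) (by omega) (by omega) (by omega)
        (Or.inr rfl) (Or.inl rfl) (Or.inr rfl) (by push_cast; omega)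
    · rcases eq_or_lt_of_le (show (k:ℤ) - 2 + 1 ≤ t by omega) with h2 | h2
      · exact isRep_of_three (a := 0) (b := 1) (c := k - 2) (x := 1) (y := 1) (z := 1)
          (by omega) (by omega) (by omega) (by omega) (by omega) (by omega)
          (Or.inr rfl) (Or.inr rfl) (Or.inr rfl) (by push_cast; omega)
      · rcases le_or_gt t (2*(k:ℤ) - 3) with h3 | h3
        · exact isRep_of_three (a := k - 1) (b := 0) (c := (t - k + 1).toNat) (x := 1)
            (y := 1) (z := 1)
            (by omega) (by omega) (by omega) (by omega) (by omega) (by omega)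
            (Or.inr rfl) (Or.inr rfl) (Or.inr rfl) (by push_cast; omega)
        · exact isRep_of_three (a := k - 1) (b := k - 2) (c := (t - 2*k + 3).toNat) (x := 1)
            (y := 1) (z := 1)
            (by omega) (by omega) (by omega) (by omega) (by omega) (by omega)
            (Or.inr rfl) (Or.inr rfl) (Or.inr rfl) (by push_cast; omega)

lemma isRep_main : ∀ h : ℕ, 3 ≤ h → ∀ k : ℕ, h + 1 ≤ k → ∀ t : ℤ, |t| ≤ Mz k h →
    IsRep k h t := by
  intro h hh
  induction h, hh using Nat.le_induction with
  | base =>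
    intro k hk t ht
    have hMz : Mz k 3 = 3*(k:ℤ) - 6 := by
      simp [Mz, Finset.sum_range_succ]
      ring
    rw [hMz] at ht
    rcases abs_le.1 ht with ⟨h1, h2⟩
    rcases le_or_gt 0 t with h3 | h3
    · exact isRep_three (by omega) h3 h2
    · have := isRep_three (k := k) (t := -t) (by omega) (by omega) (by omega)
      simpa using isRep_neg this
  | succ h hh ih =>
    intro k hk t ht
    obtain ⟨m, rfl⟩ : ∃ m, k = m + 1 := ⟨k-1, by omega⟩
    have hm : h + 1 ≤ m := by omega
    have hmM : (m:ℤ) ≤ Mz m h := le_Mz (by omega) hm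
    rw [Mz_succ_succ] at ht
    rcases abs_le.1 ht with ⟨hb1, hb2⟩
    suffices H : ∀ t : ℤ, 0 ≤ t → t ≤ m + Mz m h → IsRep (m+1) (h+1) t by
      rcases le_or_gt 0 t with h3 | h3
      · exact H t h3 hb2
      · have := H (-t) (by omega) (by linarith)
        simpa using isRep_neg this
    intro t ht0 ht2
    have hrep : IsRep m h (t - m) := by
      refine ih m hm _ (abs_le.2 ⟨by linarith, by linarith⟩)
    obtain ⟨g, hv, hsum, hval⟩ := hrep
    refine ⟨fun i => if i = m then 1 else g i, ?_, ?_, ?_⟩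
    · intro i
      by_cases h5 : i = m
      · simp [h5]
      · simpa [h5] using hv i
    · rw [Finset.sum_range_succ]
      rw [show (∑ i ∈ Finset.range m, |if i = m then (1:ℤ) else g i|) =
          ∑ i ∈ Finset.range m, |g i| from Finset.sum_congr rfl (fun i hi => by
        have h6 : i ≠ m := by simp only [Finset.mem_range] at hi; omega
        simp [h6])]
      rw [hsum]
      simp
    · rw [Finset.sum_range_succ]
      rw [show (∑ i ∈ Finset.range m, (if i = m then (1:ℤ) else g i) * i) =
          ∑ i ∈ Finset.range m, g i * i from Finset.sum_congr rfl (fun i hi => by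
        have h6 : i ≠ m := by simp only [Finset.mem_range] at hi; omega
        simp [h6])]
      rw [hval]
      simp

theorem stmt7 (h k : ℕ) (hh : 4 ≤ h) (hhk : h ≤ k - 1) (hk : 5 ≤ k)
    (d : ℤ) (hd : 0 < d)
    (A : Finset ℤ) (hA : A = (Finset.range k).image (fun i : ℕ => (i : ℤ) * d)) :
    (signedSumset h A).ncard = 2 * h * k - h * (h + 1) + 1 := by
  have hd0 : d ≠ 0 := ne_of_gt hd
  have hinj : ∀ x ∈ Finset.range k, ∀ y ∈ Finset.range k,
      (x:ℤ) * d = (y:ℤ) * d → x = y := by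
    intro x _ y _ hxy
    have := mul_right_cancel₀ hd0 hxy
    exact_mod_cast this
  have key : signedSumset h A = (fun t : ℤ => t * d) '' Set.Icc (-(Mz k h)) (Mz k h) := by
    ext x
    simp only [signedSumset, Set.mem_setOf_eq, Set.mem_image, Set.mem_Icc]
    constructor
    · rintro ⟨f, hv, hsupp, hcard, hx⟩
      set g : ℕ → ℤ := fun i => f ((i:ℤ) * d) with hg
      have hsum1 : (∑ a ∈ A, |f a|) = ∑ i ∈ Finset.range k, |g i| := by
        rw [hA, Finset.sum_image hinj]
      have hsum2 : (∑ a ∈ A, f a * a) = (∑ i ∈ Finset.range k, g i * i) * d := by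
        rw [hA, Finset.sum_image hinj, Finset.sum_mul]
        exact Finset.sum_congr rfl (fun i _ => by ring)
      set S := (Finset.range k).filter (fun i => g i ≠ 0) with hSdef
      have hS1 : ∑ i ∈ S, |g i| = ∑ i ∈ Finset.range k, |g i| :=
        Finset.sum_filter_of_ne (fun x _ hx => by simpa using hx)
      have hS2 : ∀ i ∈ S, |g i| = 1 := by
        intro i hi
        have hne : g i ≠ 0 := (Finset.mem_filter.1 hi).2
        rcases hv ((i:ℤ)*d) with h'|h'|h'
        · simp [hg, h']
        · exact absurd h' hne
        · simp [hg, h']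
      have hScard : (S.card : ℤ) = h := by
        have : ∑ i ∈ S, |g i| = (S.card : ℤ) := by
          rw [Finset.sum_congr rfl hS2]
          simp
        rw [← hcard, hsum1, ← hS1, this]
      have hcardS : S.card = h := by exact_mod_cast hScard
      have ht1 : (∑ i ∈ Finset.range k, g i * i) = ∑ i ∈ S, g i * i :=
        (Finset.sum_filter_of_ne (fun x _ hx => by
          intro h'
          rw [h'] at hx
          simp at hx)).symm
      have habs : |∑ i ∈ S, g i * i| ≤ ∑ i ∈ S, (i:ℤ) := by
        refine le_trans (Finset.abs_sum_le_sum_abs _ _) ?_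
        apply Finset.sum_le_sum
        intro i hi
        rw [abs_mul, hS2 i hi, one_mul, abs_of_nonneg (by positivity)]
      have hle : (∑ i ∈ S, (i:ℤ)) ≤ Mz k h := by
        have := sum_le_Mz k S (Finset.filter_subset _ _)
        rwa [hcardS] at this
      have hb := abs_le.1 (le_trans (ht1 ▸ habs) hle)
      exact ⟨∑ i ∈ Finset.range k, g i * i, ⟨hb.1, hb.2⟩, by rw [hx, hsum2]⟩
    · rintro ⟨t, ⟨ht1, ht2⟩, rfl⟩
      obtain ⟨g, hv, hsum, hval⟩ :=
        isRep_main h (by omega) k (by omega) t (abs_le.2 ⟨ht1, ht2⟩)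
      have hmem : ∀ i ∈ Finset.range k, ((i:ℤ)*d ∈ A) := fun i hi => by
        rw [hA]; exact Finset.mem_image_of_mem _ hi
      have hdiv : ∀ i : ℕ, (((i:ℤ)*d)/d).toNat = i := fun i => by
        rw [Int.mul_ediv_cancel _ hd0]
        simp
      refine ⟨fun a => if a ∈ A then g ((a / d).toNat) else 0, ?_, ?_, ?_, ?_⟩
      · intro a
        by_cases ha : a ∈ A
        · simpa [ha] using hv ((a / d).toNat)
        · simp [ha]
      · intro a ha
        simp [ha]
      · calc (∑ a ∈ A, |if a ∈ A then g ((a / d).toNat) else 0|)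
            = ∑ i ∈ Finset.range k, |if (i:ℤ)*d ∈ A then g (((i:ℤ)*d / d).toNat) else 0| := by
              rw [hA]; exact Finset.sum_image hinj
          _ = ∑ i ∈ Finset.range k, |g i| := Finset.sum_congr rfl (fun i hi => by
              rw [if_pos (hmem i hi), hdiv i])
          _ = (h : ℤ) := hsum
      · calc (t * d)
            = (∑ i ∈ Finset.range k, g i * i) * d := by rw [hval]
          _ = ∑ i ∈ Finset.range k, g i * ((i:ℤ)*d) := by
              rw [Finset.sum_mul]; exact Finset.sum_congr rfl (fun i _ => by ring)
          _ = ∑ i ∈ Finset.range k,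
              (if (i:ℤ)*d ∈ A then g (((i:ℤ)*d / d).toNat) else 0) * ((i:ℤ)*d) :=
              Finset.sum_congr rfl (fun i hi => by rw [if_pos (hmem i hi), hdiv i])
          _ = ∑ a ∈ A, (if a ∈ A then g ((a / d).toNat) else 0) * a := by
              rw [hA, Finset.sum_image hinj]
  rw [key]
  rw [Set.ncard_image_of_injective _ (fun a b hab => mul_right_cancel₀ hd0 hab)]
  rw [← Finset.coe_Icc, Set.ncard_coe_finset, Int.card_Icc]
  have h2m := Mz_two_mul k h
  have hnn := Mz_nonneg (show h ≤ k by omega)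
  have e1 : 2 * Mz k h = ((2*h*k : ℕ) : ℤ) - ((h*(h+1) : ℕ) : ℤ) := by
    rw [h2m]; push_cast; ring
  have hge : (h*(h+1) : ℕ) ≤ (2*h*k : ℕ) := by
    have h1 : h + 1 ≤ k := by omega
    calc h*(h+1) ≤ h*k := Nat.mul_le_mul_left h h1
    _ ≤ 2*h*k := by nlinarith
  omega
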